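/- Let L be a subdirectly irreducible pk-algebra satisfying a* ≤ C(b) ∨ T(a)* for all a, b ∈ L. Then every prime filter of L that is not maximal is contained in every maximal prime filter of L. -/
import Mathlib


/-- A pseudocomplemented De Morgan algebra (pm-algebra): a bounded distributive
lattice with a De Morgan involution `dm` and a pseudocomplement `pc`. -/
class PMAlgebra (L : Type*) extends DistribLattice L, BoundedOrder L where
  dm : L → L
  pc : L → L
  dm_dm : ∀ a : L, dm (dm a) = a
  dm_inf : ∀ a b : L, dm (a ⊓ b) = dm a ⊔ dm b
  pc_iff : ∀ a b : L, a ⊓ b = ⊥ ↔ b ≤ pc a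

namespace PMAlgebra

variable {L : Type*} [PMAlgebra L]

/-- A congruence of a pm-algebra. -/
def IsCongruence (θ : L → L → Prop) : Prop :=
  Equivalence θ ∧
  (∀ a b c d : L, θ a b → θ c d → θ (a ⊓ c) (b ⊓ d)) ∧
  (∀ a b c d : L, θ a b → θ c d → θ (a ⊔ c) (b ⊔ d)) ∧
  (∀ a b : L, θ a b → θ (dm a) (dm b)) ∧
  (∀ a b : L, θ a b → θ (pc a) (pc b))

/-- `L` is simple: it has more than one element and its only congruences are
equality and the total relation. -/
def Simple (L : Type*) [PMAlgebra L] : Prop :=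
  Nontrivial L ∧ ∀ θ : L → L → Prop, IsCongruence θ →
    θ = (fun a b => a = b) ∨ θ = (fun _ _ => True)

/-- `L` is subdirectly irreducible: there is a congruence `μ ≠ Eq` contained in
every congruence different from equality. -/
def SubdirectlyIrreducible (L : Type*) [PMAlgebra L] : Prop :=
  ∃ μ : L → L → Prop, IsCongruence μ ∧ μ ≠ (fun a b => a = b) ∧
    ∀ θ : L → L → Prop, IsCongruence θ → θ ≠ (fun a b => a = b) →
      ∀ a b : L, μ a b → θ a b

/-- A prime filter of the underlying lattice of `L`. -/
def IsPrimeFilter (P : Set L) : Prop :=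
  P.Nonempty ∧ P ≠ Set.univ ∧
  (∀ a b : L, a ∈ P → a ≤ b → b ∈ P) ∧
  (∀ a b : L, a ∈ P → b ∈ P → a ⊓ b ∈ P) ∧
  (∀ a b : L, a ⊔ b ∈ P → a ∈ P ∨ b ∈ P)

/-- The Birula–Rasiowa transformation. -/
def phi (P : Set L) : Set L := {a : L | dm a ∉ P}

/-- `P` is a maximal prime filter. -/
def IsMaximalPF (P : Set L) : Prop :=
  IsPrimeFilter P ∧ ∀ Q : Set L, IsPrimeFilter Q → P ⊆ Q → Q = P

/-- `P` is a minimal prime filter. -/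
def IsMinimalPF (P : Set L) : Prop :=
  IsPrimeFilter P ∧ ∀ Q : Set L, IsPrimeFilter Q → Q ⊆ P → Q = P

/-- The body of `L`: prime filters that are neither maximal nor minimal. -/
def body (L : Type*) [PMAlgebra L] : Set (Set L) :=
  {P : Set L | IsPrimeFilter P ∧ ¬ IsMaximalPF P ∧ ¬ IsMinimalPF P}

/-- The prime filter space of `L` is φ-connected. -/
def PhiConnected (L : Type*) [PMAlgebra L] : Prop :=
  ∀ S : Set (Set L), S ⊆ {P : Set L | IsPrimeFilter P} → S.Nonempty →
    (∀ P Q : Set L, P ∈ S → IsPrimeFilter Q → P ⊆ Q → Q ∈ S) →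
    (∀ P Q : Set L, P ∈ S → IsPrimeFilter Q → Q ⊆ P → Q ∈ S) →
    (∀ P : Set L, P ∈ S → phi P ∈ S) →
    S = {P : Set L | IsPrimeFilter P}

/-- The Kleene identity. -/
def Kleene (L : Type*) [PMAlgebra L] : Prop :=
  ∀ a b : L, a ⊓ dm a ≤ b ⊔ dm b

/-- The term `C(x) = (x ∧ x') ∨ (x ∧ x')*`. -/
def C (x : L) : L := (x ⊓ dm x) ⊔ pc (x ⊓ dm x)

/-- The term `T(x) = C(x) ∧ C(x)'`. -/
def T (x : L) : L := C x ⊓ dm (C x)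

end PMAlgebra

open PMAlgebra

section Aux

variable {L : Type*} [PMAlgebra L]

lemma C_eq (x : L) : C x = (x ⊓ dm x) ⊔ pc (x ⊓ dm x) := rfl

lemma T_eq (x : L) : T x = C x ⊓ dm (C x) := rfl

lemma pm_inf_pc (a : L) : a ⊓ pc a = ⊥ := (pc_iff a (pc a)).mpr le_rfl

lemma pm_le_pc {a b : L} (h : a ⊓ b = ⊥) : b ≤ pc a := (pc_iff a b).mp h

lemma pm_pc_antitone {a b : L} (h : a ≤ b) : pc b ≤ pc a :=
  pm_le_pc (le_bot_iff.mp ((inf_le_inf_right (pc b) h).trans (le_of_eq (pm_inf_pc b))))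

lemma pm_dm_antitone {a b : L} (h : a ≤ b) : dm b ≤ dm a := by
  have h1 : a ⊓ b = a := inf_eq_left.mpr h
  have h2 : dm (a ⊓ b) = dm a ⊔ dm b := dm_inf a b
  rw [h1] at h2
  exact le_trans le_sup_right h2.ge

lemma pm_dm_sup (a b : L) : dm (a ⊔ b) = dm a ⊓ dm b := by
  have h : dm (dm a ⊓ dm b) = a ⊔ b := by rw [dm_inf, dm_dm, dm_dm]
  rw [← h, dm_dm]

lemma pm_dm_bot : dm (⊥ : L) = ⊤ := by
  have h := pm_dm_antitone (bot_le : (⊥ : L) ≤ dm ⊤)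
  rw [dm_dm] at h
  exact top_le_iff.mp h

lemma pm_dm_top : dm (⊤ : L) = ⊥ := by rw [← pm_dm_bot, dm_dm]

lemma pm_pc_bot : pc (⊥ : L) = ⊤ :=
  top_le_iff.mp (pm_le_pc (by rw [bot_inf_eq]))

lemma pm_pc_sup (a b : L) : pc (a ⊔ b) = pc a ⊓ pc b := by
  apply le_antisymm
  · exact le_inf (pm_pc_antitone le_sup_left) (pm_pc_antitone le_sup_right)
  · apply pm_le_pc
    apply le_bot_iff.mp
    rw [inf_sup_right]
    apply sup_le
    · calc a ⊓ (pc a ⊓ pc b) ≤ a ⊓ pc a := inf_le_inf_left a inf_le_left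
        _ = ⊥ := pm_inf_pc a
    · calc b ⊓ (pc a ⊓ pc b) ≤ b ⊓ pc b := inf_le_inf_left b inf_le_right
        _ = ⊥ := pm_inf_pc b

lemma pm_pc_inf (p u : L) : pc p ⊓ u = pc (p ⊓ u) ⊓ u := by
  apply le_antisymm
  · exact inf_le_inf_right u (pm_pc_antitone inf_le_left)
  · refine le_inf ?_ inf_le_right
    apply pm_le_pc
    apply le_bot_iff.mp
    calc p ⊓ (pc (p ⊓ u) ⊓ u)
        ≤ (p ⊓ u) ⊓ pc (p ⊓ u) := by
          refine le_inf (le_inf inf_le_left ?_) ?_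
          · exact inf_le_right.trans inf_le_right
          · exact inf_le_right.trans inf_le_left
      _ = ⊥ := pm_inf_pc (p ⊓ u)

-- prime filter basics

lemma pf_up {P : Set L} (hP : IsPrimeFilter P) {a b : L} (ha : a ∈ P) (hab : a ≤ b) : b ∈ P :=
  hP.2.2.1 a b ha hab

lemma pf_inf {P : Set L} (hP : IsPrimeFilter P) {a b : L} (ha : a ∈ P) (hb : b ∈ P) :
    a ⊓ b ∈ P := hP.2.2.2.1 a b ha hb

lemma pf_prime {P : Set L} (hP : IsPrimeFilter P) {a b : L} (h : a ⊔ b ∈ P) :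
    a ∈ P ∨ b ∈ P := hP.2.2.2.2 a b h

lemma pf_top_mem {P : Set L} (hP : IsPrimeFilter P) : (⊤ : L) ∈ P := by
  obtain ⟨x, hx⟩ := hP.1
  exact pf_up hP hx le_top

lemma pf_bot_not_mem {P : Set L} (hP : IsPrimeFilter P) : (⊥ : L) ∉ P := by
  intro h
  exact hP.2.1 (Set.eq_univ_of_forall fun y => pf_up hP h bot_le)

lemma pf_disj {P : Set L} (hP : IsPrimeFilter P) {u v : L} (hu : u ∈ P) (huv : u ⊓ v = ⊥) :
    v ∉ P := fun hv => pf_bot_not_mem hP (huv ▸ pf_inf hP hu hv)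

lemma pf_phi {P : Set L} (hP : IsPrimeFilter P) : IsPrimeFilter (phi P) := by
  refine ⟨⟨⊤, ?_⟩, ?_, ?_, ?_, ?_⟩
  · show dm ⊤ ∉ P
    rw [pm_dm_top]
    exact pf_bot_not_mem hP
  · intro h
    have hb : (⊥ : L) ∈ phi P := h ▸ Set.mem_univ (⊥ : L)
    apply hb
    rw [pm_dm_bot]
    exact pf_top_mem hP
  · intro a b ha hab
    intro hdmb
    exact ha (pf_up hP hdmb (pm_dm_antitone hab))
  · intro a b ha hb
    show dm (a ⊓ b) ∉ P
    rw [dm_inf]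
    intro h
    rcases pf_prime hP h with h' | h'
    exacts [ha h', hb h']
  · intro a b hab
    by_contra hcon
    push_neg at hcon
    obtain ⟨ha, hb⟩ := hcon
    have ha' : dm a ∈ P := not_not.mp ha
    have hb' : dm b ∈ P := not_not.mp hb
    apply hab
    show dm (a ⊔ b) ∈ P
    rw [pm_dm_sup]
    exact pf_inf hP ha' hb'

lemma pf_phi_comp (hk : Kleene L) {P : Set L} (hP : IsPrimeFilter P) :
    phi P ⊆ P ∨ P ⊆ phi P := by
  by_contra h
  push_neg at h
  obtain ⟨h1, h2⟩ := h
  obtain ⟨x, hx1, hx2⟩ := Set.not_subset.mp h1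
  obtain ⟨y, hy1, hy2⟩ := Set.not_subset.mp h2
  have hdy : dm y ∈ P := not_not.mp hy2
  have hin : y ⊓ dm y ∈ P := pf_inf hP hy1 hdy
  have hup : x ⊔ dm x ∈ P := pf_up hP hin (hk y x)
  rcases pf_prime hP hup with h' | h'
  · exact hx2 h'
  · exact hx1 h'

end Aux
section Aux2

variable {L : Type*} [PMAlgebra L]

lemma exists_max_prime (F : Set L) (hne : F.Nonempty)
    (hup : ∀ a b : L, a ∈ F → a ≤ b → b ∈ F)
    (hinf : ∀ a b : L, a ∈ F → b ∈ F → a ⊓ b ∈ F)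
    (hbot : (⊥ : L) ∉ F) :
    ∃ M : Set L, IsMaximalPF M ∧ F ⊆ M := by
  set S : Set (Set L) :=
    {G | F ⊆ G ∧ (⊥ : L) ∉ G ∧ (∀ a b : L, a ∈ G → a ≤ b → b ∈ G) ∧
      (∀ a b : L, a ∈ G → b ∈ G → a ⊓ b ∈ G)} with hSdef
  have hFS : F ∈ S := ⟨Set.Subset.rfl, hbot, hup, hinf⟩
  have hchain : ∀ c ⊆ S, IsChain (· ⊆ ·) c → c.Nonempty →
      ∃ ub ∈ S, ∀ s ∈ c, s ⊆ ub := by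
    intro c hcS hc hcne
    obtain ⟨s0, hs0⟩ := hcne
    refine ⟨⋃₀ c, ⟨?_, ?_, ?_, ?_⟩, fun s hs => Set.subset_sUnion_of_mem hs⟩
    · exact (hcS hs0).1.trans (Set.subset_sUnion_of_mem hs0)
    · rintro ⟨s, hs, hbs⟩
      exact (hcS hs).2.1 hbs
    · rintro a b ⟨s, hs, has⟩ hab
      exact ⟨s, hs, (hcS hs).2.2.1 a b has hab⟩
    · rintro a b ⟨s, hs, has⟩ ⟨t, ht, hbt⟩
      rcases hc.total hs ht with hst | hts
      · exact ⟨t, ht, (hcS ht).2.2.2 a b (hst has) hbt⟩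
      · exact ⟨s, hs, (hcS hs).2.2.2 a b has (hts hbt)⟩
  obtain ⟨M, hFM, hMmax⟩ := zorn_subset_nonempty S hchain F hFS
  have hMS : M ∈ S := hMmax.1
  have hMmax' : ∀ G ∈ S, M ⊆ G → G ⊆ M := fun G hG hMG => hMmax.2 hG hMG
  have hMbot : (⊥ : L) ∉ M := hMS.2.1
  have hMup : ∀ a b : L, a ∈ M → a ≤ b → b ∈ M := hMS.2.2.1
  have hMinf : ∀ a b : L, a ∈ M → b ∈ M → a ⊓ b ∈ M := hMS.2.2.2
  have hMne : M.Nonempty := hne.mono hFM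
  have hMtop : (⊤ : L) ∈ M := by
    obtain ⟨x0, hx0⟩ := hMne
    exact hMup x0 ⊤ hx0 le_top
  have hMprime : ∀ a b : L, a ⊔ b ∈ M → a ∈ M ∨ b ∈ M := by
    intro x y hxy
    by_contra hcon
    push_neg at hcon
    obtain ⟨hx, hy⟩ := hcon
    have key : ∀ z : L, z ∉ M → ∃ m ∈ M, m ⊓ z = ⊥ := by
      intro z hz
      by_cases hbG : (⊥ : L) ∈ {w : L | ∃ m ∈ M, m ⊓ z ≤ w}
      · obtain ⟨m, hm, hmz⟩ := hbG
        exact ⟨m, hm, le_bot_iff.mp hmz⟩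
      · exfalso
        have hGS : {w : L | ∃ m ∈ M, m ⊓ z ≤ w} ∈ S := by
          refine ⟨?_, hbG, ?_, ?_⟩
          · intro f hf
            exact ⟨f, hFM hf, inf_le_left⟩
          · rintro a b ⟨m, hm, hmz⟩ hab
            exact ⟨m, hm, hmz.trans hab⟩
          · rintro a b ⟨m1, h1, hh1⟩ ⟨m2, h2, hh2⟩
            refine ⟨m1 ⊓ m2, hMinf m1 m2 h1 h2, le_inf ?_ ?_⟩
            · exact ((inf_le_inf_right z inf_le_left)).trans hh1
            · exact ((inf_le_inf_right z inf_le_right)).trans hh2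
        have hMG : M ⊆ {w : L | ∃ m ∈ M, m ⊓ z ≤ w} := fun m hm => ⟨m, hm, inf_le_left⟩
        have hsub := hMmax' _ hGS hMG
        exact hz (hsub ⟨⊤, hMtop, by rw [top_inf_eq]⟩)
    obtain ⟨m1, hm1, h1⟩ := key x hx
    obtain ⟨m2, hm2, h2⟩ := key y hy
    have hmem : (m1 ⊓ m2) ⊓ (x ⊔ y) ∈ M := hMinf _ _ (hMinf _ _ hm1 hm2) hxy
    have heq : (m1 ⊓ m2) ⊓ (x ⊔ y) = ⊥ := by
      apply le_bot_iff.mp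
      rw [inf_sup_left]
      apply sup_le
      · calc (m1 ⊓ m2) ⊓ x ≤ m1 ⊓ x := inf_le_inf_right x inf_le_left
          _ = ⊥ := h1
      · calc (m1 ⊓ m2) ⊓ y ≤ m2 ⊓ y := inf_le_inf_right y inf_le_right
          _ = ⊥ := h2
    exact hMbot (heq ▸ hmem)
  have hMPF : IsPrimeFilter M :=
    ⟨hMne, fun h => hMbot (h ▸ Set.mem_univ (⊥ : L)), hMup, hMinf, hMprime⟩
  refine ⟨M, ⟨hMPF, ?_⟩, hFM⟩
  intro G hG hMG
  have hGS : G ∈ S := ⟨hFM.trans hMG, pf_bot_not_mem hG, hG.2.2.1, hG.2.2.2.1⟩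
  exact Set.Subset.antisymm (hMmax' G hGS hMG) hMG

lemma exists_max_ext {P : Set L} (hP : IsPrimeFilter P) : ∃ M, IsMaximalPF M ∧ P ⊆ M :=
  exists_max_prime P hP.1 hP.2.2.1 hP.2.2.2.1 (pf_bot_not_mem hP)

lemma max_pc_mem {Q : Set L} (hQ : IsMaximalPF Q) {a : L} (ha : a ∉ Q) : pc a ∈ Q := by
  by_contra hpa
  have hbF : (⊥ : L) ∉ {z : L | ∃ q ∈ Q, q ⊓ a ≤ z} := by
    rintro ⟨q, hq, hqa⟩
    apply hpa
    apply pf_up hQ.1 hq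
    apply pm_le_pc
    rw [inf_comm]
    exact le_bot_iff.mp hqa
  obtain ⟨M, hM, hFM⟩ := exists_max_prime {z : L | ∃ q ∈ Q, q ⊓ a ≤ z}
    ⟨a, ⟨⊤, pf_top_mem hQ.1, by rw [top_inf_eq]⟩⟩
    (by rintro z w ⟨q, hq, hz⟩ hzw; exact ⟨q, hq, hz.trans hzw⟩)
    (by
      rintro z w ⟨q1, h1, hz⟩ ⟨q2, h2, hw⟩
      refine ⟨q1 ⊓ q2, pf_inf hQ.1 h1 h2, le_inf ?_ ?_⟩
      · exact ((inf_le_inf_right a inf_le_left)).trans hz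
      · exact ((inf_le_inf_right a inf_le_right)).trans hw)
    hbF
  have hQM : Q ⊆ M := fun q hq => hFM ⟨q, hq, inf_le_left⟩
  have hMQ : M = Q := hQ.2 M hM.1 hQM
  exact ha (hMQ ▸ hFM ⟨⊤, pf_top_mem hQ.1, by rw [top_inf_eq]⟩)

lemma dense_mem_max {Q : Set L} (hQ : IsMaximalPF Q) {y : L} (hy : pc y = ⊥) : y ∈ Q := by
  by_contra h
  have h2 := max_pc_mem hQ h
  rw [hy] at h2
  exact pf_bot_not_mem hQ.1 h2

lemma max_dm_mem (hk : Kleene L) {Q : Set L} (hQ : IsMaximalPF Q) {a : L} (ha : a ∉ Q) :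
    dm a ∈ Q := by
  have hphi : phi Q ⊆ Q := by
    rcases pf_phi_comp hk hQ.1 with h | h
    · exact h
    · have heq := hQ.2 (phi Q) (pf_phi hQ.1) h
      rw [heq]
  by_contra hdm
  exact ha (hphi (show a ∈ phi Q from hdm))

lemma max_C_mem {Q : Set L} (hQ : IsMaximalPF Q) (b : L) : C b ∈ Q := by
  by_cases h : b ⊓ dm b ∈ Q
  · exact pf_up hQ.1 h (le_sup_left : b ⊓ dm b ≤ C b)
  · exact pf_up hQ.1 (max_pc_mem hQ h) (le_sup_right : pc (b ⊓ dm b) ≤ C b)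

end Aux2
section Aux3

variable {L : Type*} [PMAlgebra L]

lemma theta_congr (u : L) (hu : u ⊓ dm u = ⊥) :
    IsCongruence (fun a b : L => a ⊓ u = b ⊓ u) := by
  have hdu : dm u ⊓ u = ⊥ := by rw [inf_comm]; exact hu
  refine ⟨⟨fun _ => rfl, Eq.symm, Eq.trans⟩, ?_, ?_, ?_, ?_⟩
  · intro a b c d h1 h2
    have e : ∀ p q : L, (p ⊓ q) ⊓ u = (p ⊓ u) ⊓ (q ⊓ u) := by
      intro p q
      apply le_antisymm
      · exact le_inf (inf_le_inf_right u inf_le_left) (inf_le_inf_right u inf_le_right)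
      · exact le_inf (le_inf (inf_le_left.trans inf_le_left) (inf_le_right.trans inf_le_left))
          (inf_le_left.trans inf_le_right)
    show (a ⊓ c) ⊓ u = (b ⊓ d) ⊓ u
    rw [e a c, e b d, h1, h2]
  · intro a b c d h1 h2
    show (a ⊔ c) ⊓ u = (b ⊔ d) ⊓ u
    rw [inf_sup_right, inf_sup_right, h1, h2]
  · intro a b h
    have e : ∀ p : L, dm p ⊓ u = dm (p ⊓ u) ⊓ u := by
      intro p
      rw [dm_inf, inf_sup_right, hdu, sup_bot_eq]
    show dm a ⊓ u = dm b ⊓ u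
    rw [e a, e b, h]
  · intro a b h
    show pc a ⊓ u = pc b ⊓ u
    rw [pm_pc_inf a u, pm_pc_inf b u, h]

lemma si_dichotomy (hsi : SubdirectlyIrreducible L) {u : L} (hu : u ⊓ dm u = ⊥) :
    u = ⊥ ∨ u = ⊤ := by
  by_contra hcon
  push_neg at hcon
  obtain ⟨hub, hut⟩ := hcon
  have hu' : dm u ⊓ dm (dm u) = ⊥ := by rw [dm_dm, inf_comm]; exact hu
  have hsup : u ⊔ dm u = ⊤ := by
    have h := congrArg dm hu
    rw [dm_inf, pm_dm_bot, dm_dm] at h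
    rw [sup_comm]
    exact h
  obtain ⟨μ, hμc, hμne, hμmin⟩ := hsi
  have h1 : (fun a b : L => a ⊓ u = b ⊓ u) ≠ (fun a b : L => a = b) := by
    intro hEq
    have hx : dm u ⊓ u = ⊥ ⊓ u := by rw [bot_inf_eq, inf_comm]; exact hu
    have h2 : dm u = ⊥ := Eq.mp (congrFun (congrFun hEq (dm u)) ⊥) hx
    apply hut
    rw [← dm_dm u, h2, pm_dm_bot]
  have h2 : (fun a b : L => a ⊓ dm u = b ⊓ dm u) ≠ (fun a b : L => a = b) := by
    intro hEq
    have hx : u ⊓ dm u = ⊥ ⊓ dm u := by rw [bot_inf_eq]; exact hu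
    exact hub (Eq.mp (congrFun (congrFun hEq u) ⊥) hx)
  have hsub1 := hμmin _ (theta_congr u hu) h1
  have hsub2 := hμmin _ (theta_congr (dm u) hu') h2
  have hex : ∃ a b : L, μ a b ∧ a ≠ b := by
    by_contra hno
    push_neg at hno
    apply hμne
    funext a b
    apply propext
    exact ⟨hno a b, fun h => h ▸ hμc.1.refl a⟩
  obtain ⟨a, b, hab, hne⟩ := hex
  apply hne
  have e1 : a ⊓ u = b ⊓ u := hsub1 a b hab
  have e2 : a ⊓ dm u = b ⊓ dm u := hsub2 a b hab
  calc a = a ⊓ (u ⊔ dm u) := by rw [hsup, inf_top_eq]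
    _ = (a ⊓ u) ⊔ (a ⊓ dm u) := by rw [inf_sup_left]
    _ = (b ⊓ u) ⊔ (b ⊓ dm u) := by rw [e1, e2]
    _ = b ⊓ (u ⊔ dm u) := by rw [inf_sup_left]
    _ = b := by rw [hsup, inf_top_eq]

lemma pm_claim2 (hk : Kleene L) {x : L} (hC : C x = ⊤) : x ⊓ dm x = ⊥ := by
  by_contra hd
  obtain ⟨M, hM, hdM'⟩ := exists_max_prime {z : L | x ⊓ dm x ≤ z} ⟨x ⊓ dm x, le_rfl⟩
    (fun a b ha hab => ha.trans hab) (fun a b ha hb => le_inf ha hb)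
    (fun h => hd (le_bot_iff.mp h))
  have hdM : x ⊓ dm x ∈ M := hdM' le_rfl
  have hgM : pc (x ⊓ dm x) ∉ M := pf_disj hM.1 hdM (pm_inf_pc _)
  have hdmg : dm (pc (x ⊓ dm x)) ∈ M := max_dm_mem hk hM hgM
  have key : dm (pc (x ⊓ dm x)) ≤ pc (x ⊓ dm x) := by
    apply pm_le_pc
    apply le_bot_iff.mp
    have h1 : dm ((x ⊓ dm x) ⊔ pc (x ⊓ dm x)) = ⊥ := by
      rw [← C_eq, hC, pm_dm_top]
    rw [pm_dm_sup] at h1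
    have hled : x ⊓ dm x ≤ dm (x ⊓ dm x) := by
      rw [dm_inf, dm_dm]
      exact inf_le_left.trans le_sup_right
    calc (x ⊓ dm x) ⊓ dm (pc (x ⊓ dm x))
        ≤ dm (x ⊓ dm x) ⊓ dm (pc (x ⊓ dm x)) := inf_le_inf_right _ hled
      _ = ⊥ := h1
  exact hgM (pf_up hM.1 hdmg key)

lemma pm_pct (hk : Kleene L) (hid : ∀ a b : L, pc a ≤ C b ⊔ pc (T a)) (x : L) :
    pc (T x) ⊓ dm (pc (T x)) = ⊥ := by
  by_contra hw
  obtain ⟨M, hM, hwM'⟩ := exists_max_prime {z : L | pc (T x) ⊓ dm (pc (T x)) ≤ z}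
    ⟨_, le_rfl⟩ (fun a b ha hab => ha.trans hab) (fun a b ha hb => le_inf ha hb)
    (fun h => hw (le_bot_iff.mp h))
  have hwM : pc (T x) ⊓ dm (pc (T x)) ∈ M := hwM' le_rfl
  have huM : pc (T x) ∈ M := pf_up hM.1 hwM inf_le_left
  have hduM : dm (pc (T x)) ∈ M := pf_up hM.1 hwM inf_le_right
  have htM : T x ∉ M := pf_disj hM.1 huM (by rw [inf_comm]; exact pm_inf_pc (T x))
  have hCxM : C x ∈ M := max_C_mem hM x
  have hdmCxM : dm (C x) ∉ M := fun h => htM (pf_inf hM.1 hCxM h)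
  have hN : IsPrimeFilter (phi M) := pf_phi hM.1
  have hCxN : C x ∈ phi M := hdmCxM
  have hCsplit : (x ⊓ dm x) ⊔ pc (x ⊓ dm x) ∈ phi M := by rw [← C_eq]; exact hCxN
  rcases pf_prime hN hCsplit with hdN | hpdN
  · -- d ∈ phi M : dm (x ⊓ dm x) ∉ M
    have hdmd : dm (x ⊓ dm x) ∉ M := hdN
    have hxM : x ∉ M := by
      intro h
      apply hdmd
      apply pf_up hM.1 h
      rw [dm_inf, dm_dm]
      exact le_sup_right
    have hdmx : dm x ∈ M := max_dm_mem hk hM hxM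
    apply hdmd
    apply pf_up hM.1 hdmx
    rw [dm_inf]
    exact le_sup_left
  · -- pc d ∈ phi M
    have hTdTx : T (x ⊓ dm x) = T x := by
      have hled : (x ⊓ dm x) ≤ dm (x ⊓ dm x) := by
        rw [dm_inf, dm_dm]
        exact inf_le_left.trans le_sup_right
      have hCd : C (x ⊓ dm x) = C x := by
        rw [C_eq (x ⊓ dm x), inf_eq_left.mpr hled, ← C_eq]
      rw [T_eq, hCd, ← T_eq]
    have h1 : pc (x ⊓ dm x) ≤ C (pc (T x)) ⊔ pc (T x) := by
      have := hid (x ⊓ dm x) (pc (T x))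
      rw [hTdTx] at this
      exact this
    have h2 : C (pc (T x)) ⊔ pc (T x) ∈ phi M := pf_up hN hpdN h1
    rcases pf_prime hN h2 with h3 | h3
    · -- C (pc (T x)) ∈ phi M, i.e. dm (C (pc (T x))) ∉ M ; but it is in M
      apply h3
      show dm (C (pc (T x))) ∈ M
      have e : dm (C (pc (T x))) =
          dm (pc (T x) ⊓ dm (pc (T x))) ⊓ dm (pc (pc (T x) ⊓ dm (pc (T x)))) := by
        rw [C_eq, pm_dm_sup]
      have hdw : dm (pc (T x) ⊓ dm (pc (T x))) ∈ M := by
        apply pf_up hM.1 huM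
        rw [dm_inf, dm_dm]
        exact le_sup_right
      have hpw : pc (pc (T x) ⊓ dm (pc (T x))) ∉ M := pf_disj hM.1 hwM (pm_inf_pc _)
      have hdpw : dm (pc (pc (T x) ⊓ dm (pc (T x)))) ∈ M := max_dm_mem hk hM hpw
      rw [e]
      exact pf_inf hM.1 hdw hdpw
    · -- pc (T x) ∈ phi M : dm (pc (T x)) ∉ M
      exact h3 hduM

lemma pm_tdense (hk : Kleene L) (hsi : SubdirectlyIrreducible L)
    (hid : ∀ a b : L, pc a ≤ C b ⊔ pc (T a)) (x : L) (hxb : x ≠ ⊥) (hxt : x ≠ ⊤) :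
    pc (T x) = ⊥ := by
  rcases si_dichotomy hsi (pm_pct hk hid x) with h | h
  · exact h
  · exfalso
    have hT : T x = ⊥ := by
      have h2 := pm_inf_pc (T x)
      rw [h, inf_top_eq] at h2
      exact h2
    have hCdm : C x ⊓ dm (C x) = ⊥ := by rw [← T_eq]; exact hT
    rcases si_dichotomy hsi hCdm with hC | hC
    · have h1 : pc (x ⊓ dm x) ≤ C x := le_sup_right
      rw [hC] at h1
      have h3 : x ⊓ dm x ≤ C x := le_sup_left
      rw [hC] at h3
      have h4 : x ⊓ dm x = ⊥ := le_bot_iff.mp h3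
      rw [h4, pm_pc_bot] at h1
      exact hxb (le_bot_iff.mp ((le_bot_iff.mp h1) ▸ (le_top : x ≤ ⊤)))
    · have hdx : x ⊓ dm x = ⊥ := pm_claim2 hk hC
      rcases si_dichotomy hsi hdx with h' | h'
      exacts [hxb h', hxt h']

end Aux3
/-- In a subdirectly irreducible pk-algebra satisfying `a* ≤ C(b) ∨ T(a)*`,
every non-maximal prime filter is contained in every maximal prime filter. -/
theorem nonmax_subset_max {L : Type*} [PMAlgebra L]
    (hk : Kleene L) (hsi : SubdirectlyIrreducible L)
    (hid : ∀ a b : L, pc a ≤ C b ⊔ pc (T a)) :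
    ∀ P Q : Set L, IsPrimeFilter P → ¬ IsMaximalPF P → IsMaximalPF Q → P ⊆ Q := by
  intro P Q hP hPnm hQ
  intro a haP
  by_cases hpa : pc a = ⊥
  · exact dense_mem_max hQ hpa
  · exfalso
    apply hPnm
    have hbotP : (⊥ : L) ∉ P := pf_bot_not_mem hP
    have hane : a ≠ ⊥ := fun h => hbotP (h ▸ haP)
    have heT : pc a ≠ ⊤ := by
      intro h
      apply hane
      have h2 : a ⊓ pc a = ⊥ := pm_inf_pc a
      rw [h, inf_top_eq] at h2
      exact h2
    have hTe : pc (T (pc a)) = ⊥ := pm_tdense hk hsi hid (pc a) hpa heT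
    have hallC : ∀ b : L, C b ∈ P := by
      intro b
      have h1 : pc (pc a) ≤ C b ⊔ pc (T (pc a)) := hid (pc a) b
      rw [hTe, sup_bot_eq] at h1
      have h2 : a ≤ pc (pc a) := pm_le_pc (by rw [inf_comm]; exact pm_inf_pc a)
      exact pf_up hP haP (h2.trans h1)
    -- every dense element belongs to P
    have hdense : ∀ y : L, pc y = ⊥ → y ∈ P := by
      intro y hy
      by_contra hyP
      have hytop : y ≠ ⊤ := fun h => hyP (h ▸ pf_top_mem hP)
      have hybot : y ≠ ⊥ := by
        intro h
        rw [h, pm_pc_bot] at hy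
        exact hpa (le_bot_iff.mp (hy ▸ (le_top : pc a ≤ ⊤)))
      have hdP : y ⊓ dm y ∉ P := fun h => hyP (pf_up hP h inf_le_left)
      have hgP : pc (y ⊓ dm y) ∈ P := by
        have hCy : (y ⊓ dm y) ⊔ pc (y ⊓ dm y) ∈ P := by
          rw [← C_eq]; exact hallC y
        rcases pf_prime hP hCy with h | h
        · exact absurd h hdP
        · exact h
      have hdbot : y ⊓ dm y ≠ ⊥ := by
        intro h
        have h2 : dm y ≤ pc y := pm_le_pc h
        rw [hy] at h2
        apply hytop
        rw [← dm_dm y, le_bot_iff.mp h2, pm_dm_bot]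
      obtain ⟨M, hM, hPM⟩ := exists_max_ext hP
      have hyM : y ∈ M := dense_mem_max hM hy
      have hdM : y ⊓ dm y ∉ M :=
        pf_disj hM.1 (hPM hgP) (by rw [inf_comm]; exact pm_inf_pc (y ⊓ dm y))
      have hTy : pc (T y) = ⊥ := pm_tdense hk hsi hid y hybot hytop
      have hTyM : T y ∈ M := dense_mem_max hM hTy
      have hdmCy : dm (C y) ∈ M := pf_up hM.1 hTyM (inf_le_right : T y ≤ dm (C y))
      have hdmg : dm (pc (y ⊓ dm y)) ∈ M := by
        apply pf_up hM.1 hdmCy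
        apply pm_dm_antitone
        exact (le_sup_right : pc (y ⊓ dm y) ≤ C y)
      have hwM : pc (y ⊓ dm y) ⊓ dm (pc (y ⊓ dm y)) ∈ M := pf_inf hM.1 (hPM hgP) hdmg
      have hpwM : pc (pc (y ⊓ dm y) ⊓ dm (pc (y ⊓ dm y))) ∉ M :=
        pf_disj hM.1 hwM (pm_inf_pc _)
      have hwP : pc (y ⊓ dm y) ⊓ dm (pc (y ⊓ dm y)) ∈ P := by
        have hCg : (pc (y ⊓ dm y) ⊓ dm (pc (y ⊓ dm y))) ⊔
            pc (pc (y ⊓ dm y) ⊓ dm (pc (y ⊓ dm y))) ∈ P := by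
          rw [← C_eq]; exact hallC (pc (y ⊓ dm y))
        rcases pf_prime hP hCg with h | h
        · exact h
        · exact absurd (hPM h) hpwM
      have hdmgP : dm (pc (y ⊓ dm y)) ∈ P := pf_up hP hwP inf_le_right
      have hdmyP : dm y ∉ P := by
        intro h
        exact hdM (pf_inf hM.1 hyM (hPM h))
      rcases pf_phi_comp hk hP with hsub | hsub
      · exact hyP (hsub (show y ∈ phi P from hdmyP))
      · exact (hsub hgP) hdmgP
    -- P is maximal
    have hmaxP : ∀ z : L, z ∈ P ∨ pc z ∈ P := by
      intro z
      have hzd : pc (z ⊔ pc z) = ⊥ := by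
        rw [pm_pc_sup]
        exact pm_inf_pc (pc z)
      exact pf_prime hP (hdense _ hzd)
    refine ⟨hP, ?_⟩
    intro G hG hPG
    apply Set.Subset.antisymm _ hPG
    intro v hvG
    rcases hmaxP v with h | h
    · exact h
    · exact ((pf_bot_not_mem hG) ((pm_inf_pc v) ▸ pf_inf hG hvG (hPG h))).elim
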